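/- Let A_2 be the multiplicative function determined by A_2(p^k) = α_2(k), where α_2(k) counts pairs ((c_1,c_2),(d_1,d_2)) of nonnegative integers with c_1 ≤ c_2, c_1 + c_2 = k, d_1 ≤ d_2, d_1 ≤ c_1, d_2 ≤ c_2. Then for Re(s) > 1, Σ_{n=1}^∞ A_2(n) n^{−s} = ζ(s)² ζ(2s)³ / ζ(3s). -/

import Mathlib

/-- `alphaP r k` counts pairs `((c_1,…,c_r),(d_1,…,d_r))` of nonnegative integer
tuples with `c_1 ≤ ⋯ ≤ c_r`, `∑ c_i = k`, `d_1 ≤ ⋯ ≤ d_r`, and `d_i ≤ c_i`. -/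
noncomputable def alphaP (r k : ℕ) : ℕ :=
  Nat.card {p : (Fin r → ℕ) × (Fin r → ℕ) //
    Monotone p.1 ∧ (∑ i, p.1 i) = k ∧ Monotone p.2 ∧ ∀ i, p.2 i ≤ p.1 i}


/-- `A r` is the multiplicative function with `A r (p^k) = alphaP r k`. -/
noncomputable def Afun (r n : ℕ) : ℕ :=
  if n = 0 then 0 else ∏ p ∈ n.primeFactors, alphaP r (n.factorization p)

open Finset ArithmeticFunction LSeries

open scoped LSeries.notation

open scoped ArithmeticFunction.zeta

/-! ### Counting finsets -/

def Afin (k : ℕ) : Finset (ℕ × ℕ × ℕ × ℕ) :=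
  ((range (k+1)) ×ˢ (range (k+1)) ×ˢ (range (k+1)) ×ˢ (range (k+1))).filter
    (fun x => x.1 ≤ x.2.1 ∧ x.1 + x.2.1 = k ∧ x.2.2.1 ≤ x.2.2.2 ∧ x.2.2.1 ≤ x.1 ∧
      x.2.2.2 ≤ x.2.1)

lemma mem_Afin {k : ℕ} {x : ℕ × ℕ × ℕ × ℕ} :
    x ∈ Afin k ↔ x.1 ≤ x.2.1 ∧ x.1 + x.2.1 = k ∧ x.2.2.1 ≤ x.2.2.2 ∧ x.2.2.1 ≤ x.1 ∧
      x.2.2.2 ≤ x.2.1 := by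
  simp only [Afin, mem_filter, mem_product, mem_range]
  constructor
  · tauto
  · intro h
    refine ⟨⟨?_, ?_, ?_, ?_⟩, h⟩ <;> omega

def S1fin (k : ℕ) : Finset (ℕ × ℕ) :=
  ((range (k+1)) ×ˢ (range (k+1))).filter
    (fun v => 2 ∣ v.1 ∧ 2 ∣ v.2 ∧ v.1 + v.2 = k)

lemma mem_S1fin {k : ℕ} {v : ℕ × ℕ} :
    v ∈ S1fin k ↔ 2 ∣ v.1 ∧ 2 ∣ v.2 ∧ v.1 + v.2 = k := by
  simp only [S1fin, mem_filter, mem_product, mem_range]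
  constructor
  · tauto
  · intro h
    refine ⟨⟨?_, ?_⟩, h⟩ <;> omega

def S2fin (k : ℕ) : Finset (ℕ × ℕ × ℕ) :=
  ((range (k+1)) ×ˢ (range (k+1)) ×ˢ (range (k+1))).filter
    (fun v => 2 ∣ v.1 ∧ 2 ∣ v.2.1 ∧ 2 ∣ v.2.2 ∧ v.1 + v.2.1 + v.2.2 = k)

lemma mem_S2fin {k : ℕ} {v : ℕ × ℕ × ℕ} :
    v ∈ S2fin k ↔ 2 ∣ v.1 ∧ 2 ∣ v.2.1 ∧ 2 ∣ v.2.2 ∧ v.1 + v.2.1 + v.2.2 = k := by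
  simp only [S2fin, mem_filter, mem_product, mem_range]
  constructor
  · tauto
  · intro h
    refine ⟨⟨?_, ?_, ?_⟩, h⟩ <;> omega

def S3fin (k : ℕ) : Finset (ℕ × ℕ × ℕ × ℕ) :=
  ((range (k+1)) ×ˢ (range (k+1)) ×ˢ (range (k+1)) ×ˢ (range (k+1))).filter
    (fun v => 2 ∣ v.2.1 ∧ 2 ∣ v.2.2.1 ∧ 2 ∣ v.2.2.2 ∧ v.1 + v.2.1 + v.2.2.1 + v.2.2.2 = k)

lemma mem_S3fin {k : ℕ} {v : ℕ × ℕ × ℕ × ℕ} :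
    v ∈ S3fin k ↔ 2 ∣ v.2.1 ∧ 2 ∣ v.2.2.1 ∧ 2 ∣ v.2.2.2 ∧
      v.1 + v.2.1 + v.2.2.1 + v.2.2.2 = k := by
  simp only [S3fin, mem_filter, mem_product, mem_range]
  constructor
  · tauto
  · intro h
    refine ⟨⟨?_, ?_, ?_, ?_⟩, h⟩ <;> omega

def Sfin (k : ℕ) : Finset (ℕ × ℕ × ℕ × ℕ × ℕ) :=
  ((range (k+1)) ×ˢ (range (k+1)) ×ˢ (range (k+1)) ×ˢ (range (k+1)) ×ˢ (range (k+1))).filter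
    (fun v => 2 ∣ v.2.2.1 ∧ 2 ∣ v.2.2.2.1 ∧ 2 ∣ v.2.2.2.2 ∧
      v.1 + v.2.1 + v.2.2.1 + v.2.2.2.1 + v.2.2.2.2 = k)

lemma mem_Sfin {k : ℕ} {v : ℕ × ℕ × ℕ × ℕ × ℕ} :
    v ∈ Sfin k ↔ 2 ∣ v.2.2.1 ∧ 2 ∣ v.2.2.2.1 ∧ 2 ∣ v.2.2.2.2 ∧
      v.1 + v.2.1 + v.2.2.1 + v.2.2.2.1 + v.2.2.2.2 = k := by
  simp only [Sfin, mem_filter, mem_product, mem_range]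
  constructor
  · tauto
  · intro h
    refine ⟨⟨?_, ?_, ?_, ?_, ?_⟩, h⟩ <;> omega

def Lfin (k : ℕ) : Finset (ℕ × ℕ × ℕ × ℕ × ℕ) :=
  ((range (k+1)) ×ˢ (range (k+1)) ×ˢ (range (k+1)) ×ˢ (range (k+1)) ×ˢ (range (k+1))).filter
    (fun w => 3 ∣ w.1 ∧ w.2.1 ≤ w.2.2.1 ∧ w.1 + w.2.1 + w.2.2.1 = k ∧
      w.2.2.2.1 ≤ w.2.2.2.2 ∧ w.2.2.2.1 ≤ w.2.1 ∧ w.2.2.2.2 ≤ w.2.2.1)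

lemma mem_Lfin {k : ℕ} {w : ℕ × ℕ × ℕ × ℕ × ℕ} :
    w ∈ Lfin k ↔ 3 ∣ w.1 ∧ w.2.1 ≤ w.2.2.1 ∧ w.1 + w.2.1 + w.2.2.1 = k ∧
      w.2.2.2.1 ≤ w.2.2.2.2 ∧ w.2.2.2.1 ≤ w.2.1 ∧ w.2.2.2.2 ≤ w.2.2.1 := by
  simp only [Lfin, mem_filter, mem_product, mem_range]
  constructor
  · tauto
  · intro h
    refine ⟨⟨?_, ?_, ?_, ?_, ?_⟩, h⟩ <;> omega

/-! ### `alphaP 2` in terms of `Afin` -/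

lemma monotone_fin_two {f : Fin 2 → ℕ} : Monotone f ↔ f 0 ≤ f 1 := by
  constructor
  · intro h
    exact h (by decide : (0 : Fin 2) ≤ 1)
  · intro h i j hij
    fin_cases i <;> fin_cases j
    · exact le_refl _
    · exact h
    · exact absurd hij (by decide)
    · exact le_refl _

lemma alphaP_two_eq (k : ℕ) : alphaP 2 k = (Afin k).card := by
  rw [alphaP, ← Nat.card_eq_finsetCard]
  apply Nat.card_congr
  refine
    { toFun := fun p => ⟨(p.1.1 0, p.1.1 1, p.1.2 0, p.1.2 1), ?_⟩
      invFun := fun x => ⟨(![x.1.1, x.1.2.1], ![x.1.2.2.1, x.1.2.2.2]), ?_⟩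
      left_inv := ?_
      right_inv := ?_ }
  · obtain ⟨h1, h2, h3, h4⟩ := p.2
    rw [Fin.sum_univ_two] at h2
    rw [mem_Afin]
    exact ⟨monotone_fin_two.mp h1, h2, monotone_fin_two.mp h3, h4 0, h4 1⟩
  · have hx := mem_Afin.mp x.2
    refine ⟨monotone_fin_two.mpr (by simp; omega), ?_,
      monotone_fin_two.mpr (by simp; omega), ?_⟩
    · rw [Fin.sum_univ_two]; simp; omega
    · intro i; fin_cases i <;> simp <;> omega
  · rintro ⟨⟨f, g⟩, hp⟩
    apply Subtype.ext
    simp only [Prod.mk.injEq]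
    constructor <;> (funext i; fin_cases i <;> simp)
  · rintro ⟨⟨a, b, c, d⟩, hx⟩
    apply Subtype.ext
    simp

/-! ### Fiberwise counting -/

lemma card_fiber_sum {α : Type*} [DecidableEq α] (X : Finset (ℕ × α)) (k : ℕ)
    (hX : ∀ x ∈ X, x.1 ≤ k) (c : ℕ → ℕ)
    (hc : ∀ j, j ≤ k → (X.filter (fun x => x.1 = j)).card = c j) :
    X.card = ∑ j ∈ range (k+1), c j := by
  rw [Finset.card_eq_sum_card_fiberwise (f := Prod.fst) (t := range (k+1))
    (fun x hx => mem_range.mpr (Nat.lt_succ_of_le (hX x hx)))]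
  exact Finset.sum_congr rfl fun j hj => hc j (Nat.lt_succ_iff.mp (mem_range.mp hj))

lemma S1fin_card (k : ℕ) :
    (S1fin k).card
      = ∑ j ∈ range (k+1), (if 2 ∣ j then 1 else 0) * (if 2 ∣ (k-j) then 1 else 0) := by
  apply card_fiber_sum
  · intro x hx
    have := mem_S1fin.mp hx
    omega
  · intro j hj
    by_cases h2 : 2 ∣ j ∧ 2 ∣ (k - j)
    · have hsing : (S1fin k).filter (fun x => x.1 = j) = {(j, k - j)} := by
        apply Finset.eq_singleton_iff_unique_mem.mpr
        constructor
        · rw [mem_filter, mem_S1fin]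
          exact ⟨⟨h2.1, h2.2, by omega⟩, rfl⟩
        · intro y hy
          rw [mem_filter, mem_S1fin] at hy
          exact Prod.ext_iff.mpr ⟨by omega, by omega⟩
      rw [hsing, Finset.card_singleton, if_pos h2.1, if_pos h2.2]
    · have hz : (if 2 ∣ j then 1 else 0) * (if 2 ∣ (k-j) then 1 else 0) = 0 := by
        rcases Decidable.not_and_iff_or_not.mp h2 with h | h <;> simp [h]
      rw [hz, Finset.card_eq_zero, Finset.filter_eq_empty_iff]
      intro y hy
      rw [mem_S1fin] at hy
      intro hy1
      exact h2 ⟨by omega, by omega⟩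

lemma S2fin_card (k : ℕ) :
    (S2fin k).card = ∑ j ∈ range (k+1), (if 2 ∣ j then 1 else 0) * (S1fin (k-j)).card := by
  apply card_fiber_sum
  · intro x hx
    have := mem_S2fin.mp hx
    omega
  · intro j hj
    by_cases h2 : 2 ∣ j
    · rw [if_pos h2, one_mul]
      apply Finset.card_nbij' (i := fun v => v.2) (j := fun y => (j, y))
      · intro v hv
        simp only [mem_coe, mem_filter, mem_S2fin, mem_S1fin] at hv ⊢
        omega
      · intro y hy
        simp only [mem_coe, mem_filter, mem_S2fin, mem_S1fin, and_true, true_and] at hy ⊢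
        omega
      · intro v hv
        simp only [mem_coe, mem_filter] at hv
        rw [← hv.2]
      · intro y hy
        rfl
    · rw [if_neg h2, zero_mul, Finset.card_eq_zero, Finset.filter_eq_empty_iff]
      intro v hv
      rw [mem_S2fin] at hv
      intro h1
      exact h2 (h1 ▸ hv.1)

lemma S3fin_card (k : ℕ) :
    (S3fin k).card = ∑ j ∈ range (k+1), 1 * (S2fin (k-j)).card := by
  apply card_fiber_sum
  · intro x hx
    have := mem_S3fin.mp hx
    omega
  · intro j hj
    rw [one_mul]
    apply Finset.card_nbij' (i := fun v => v.2) (j := fun y => (j, y))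
    · intro v hv
      simp only [mem_coe, mem_filter, mem_S3fin, mem_S2fin] at hv ⊢
      omega
    · intro y hy
      simp only [mem_coe, mem_filter, mem_S3fin, mem_S2fin, and_true, true_and] at hy ⊢
      omega
    · intro v hv
      simp only [mem_coe, mem_filter] at hv
      rw [← hv.2]
    · intro y hy
      rfl

lemma Sfin_card (k : ℕ) :
    (Sfin k).card = ∑ j ∈ range (k+1), 1 * (S3fin (k-j)).card := by
  apply card_fiber_sum
  · intro x hx
    have := mem_Sfin.mp hx
    omega
  · intro j hj
    rw [one_mul]
    apply Finset.card_nbij' (i := fun v => v.2) (j := fun y => (j, y))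
    · intro v hv
      simp only [mem_coe, mem_filter, mem_Sfin, mem_S3fin] at hv ⊢
      omega
    · intro y hy
      simp only [mem_coe, mem_filter, mem_Sfin, mem_S3fin, and_true, true_and] at hy ⊢
      omega
    · intro v hv
      simp only [mem_coe, mem_filter] at hv
      rw [← hv.2]
    · intro y hy
      rfl

lemma Lfin_card (k : ℕ) :
    (Lfin k).card = ∑ j ∈ range (k+1), (if 3 ∣ j then 1 else 0) * (Afin (k-j)).card := by
  apply card_fiber_sum
  · intro x hx
    have := mem_Lfin.mp hx
    omega
  · intro j hj
    by_cases h3 : 3 ∣ j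
    · rw [if_pos h3, one_mul]
      apply Finset.card_nbij' (i := fun w => w.2) (j := fun y => (j, y))
      · intro w hw
        simp only [mem_coe, mem_filter, mem_Lfin, mem_Afin] at hw ⊢
        omega
      · intro y hy
        simp only [mem_coe, mem_filter, mem_Lfin, mem_Afin, and_true, true_and] at hy ⊢
        omega
      · intro w hw
        simp only [mem_coe, mem_filter] at hw
        rw [← hw.2]
      · intro y hy
        rfl
    · rw [if_neg h3, zero_mul, Finset.card_eq_zero, Finset.filter_eq_empty_iff]
      intro w hw
      rw [mem_Lfin] at hw
      intro h1
      exact h3 (h1 ▸ hw.1)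

/-! ### The main bijection -/

lemma Lfin_card_eq_Sfin_card (k : ℕ) : (Lfin k).card = (Sfin k).card := by
  apply Finset.card_nbij'
    (i := fun w =>
      if w.2.1 ≤ w.2.2.2.2 then
        (w.1 + (w.2.2.2.2 - w.2.1) % 2, w.2.2.1 - w.2.2.2.2, 2 * w.2.2.2.1,
          2 * (w.2.1 - w.2.2.2.1), (w.2.2.2.2 - w.2.1) - (w.2.2.2.2 - w.2.1) % 2)
      else
        (w.1 + 2, w.2.2.1 - w.2.1, 2 * w.2.2.2.1, 2 * (w.2.2.2.2 - w.2.2.2.1),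
          2 * (w.2.1 - w.2.2.2.2 - 1)))
    (j := fun v =>
      if v.1 % 3 ≤ 1 then
        (v.1 - v.1 % 3, v.2.2.1/2 + v.2.2.2.1/2,
          v.2.2.1/2 + v.2.2.2.1/2 + v.2.2.2.2 + v.1 % 3 + v.2.1, v.2.2.1/2,
          v.2.2.1/2 + v.2.2.2.1/2 + v.2.2.2.2 + v.1 % 3)
      else
        (v.1 - 2, v.2.2.1/2 + v.2.2.2.1/2 + v.2.2.2.2/2 + 1,
          v.2.2.1/2 + v.2.2.2.1/2 + v.2.2.2.2/2 + 1 + v.2.1, v.2.2.1/2,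
          v.2.2.1/2 + v.2.2.2.1/2))
  · intro w hw
    rw [mem_coe, mem_Lfin] at hw
    dsimp only
    split_ifs with h
    · rw [mem_coe, mem_Sfin]
      dsimp only
      omega
    · rw [mem_coe, mem_Sfin]
      dsimp only
      omega
  · intro v hv
    rw [mem_coe, mem_Sfin] at hv
    dsimp only
    split_ifs with h
    · rw [mem_coe, mem_Lfin]
      dsimp only
      omega
    · rw [mem_coe, mem_Lfin]
      dsimp only
      omega
  · intro w hw
    rw [mem_coe, mem_Lfin] at hw
    obtain ⟨w1, w2, w3, w4, w5⟩ := w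
    simp only at hw ⊢
    split_ifs with h1 h2 h2 <;> simp only [Prod.mk.injEq] at * <;> omega
  · intro v hv
    rw [mem_coe, mem_Sfin] at hv
    obtain ⟨v1, v2, v3, v4, v5⟩ := v
    simp only at hv ⊢
    split_ifs with h1 h2 h2 <;> simp only [Prod.mk.injEq] at * <;> omega

/-! ### Arithmetic functions -/

open scoped Classical in
noncomputable def A2 : ArithmeticFunction ℕ := ⟨Afun 2, by simp [Afun]⟩

open scoped Classical in
/-- Indicator of `r`-th powers. -/
noncomputable def pind (r : ℕ) : ArithmeticFunction ℕ :=
  ⟨fun n => if 0 < n ∧ ∃ m, m ^ r = n then 1 else 0, by simp⟩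

open scoped Classical in
lemma pind_apply {r n : ℕ} : pind r n = if 0 < n ∧ ∃ m, m ^ r = n then 1 else 0 := rfl

lemma A2_apply {n : ℕ} : A2 n = Afun 2 n := rfl

lemma exists_pow_eq_iff {r n : ℕ} (hr : 0 < r) (hn : n ≠ 0) :
    (∃ m, m ^ r = n) ↔ ∀ p, r ∣ n.factorization p := by
  constructor
  · rintro ⟨m, rfl⟩ p
    rw [Nat.factorization_pow]
    exact Dvd.intro _ rfl
  · intro h
    refine ⟨∏ p ∈ n.primeFactors, p ^ (n.factorization p / r), ?_⟩
    rw [← Finset.prod_pow]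
    conv_rhs => rw [← Nat.factorization_prod_pow_eq_self hn]
    rw [Nat.prod_factorization_eq_prod_primeFactors]
    apply Finset.prod_congr rfl
    intro p _
    rw [← pow_mul, Nat.div_mul_cancel (h p)]

lemma factorization_eq_zero_or {m n : ℕ} (h : m.Coprime n) (p : ℕ) :
    m.factorization p = 0 ∨ n.factorization p = 0 := by
  by_cases hp : p.Prime
  · by_contra hc
    push_neg at hc
    have h1 : p ∣ m := Nat.dvd_of_factorization_pos hc.1
    have h2 : p ∣ n := Nat.dvd_of_factorization_pos hc.2
    have hd : p ∣ 1 := by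
      rw [← Nat.Coprime.gcd_eq_one h]
      exact Nat.dvd_gcd h1 h2
    exact hp.one_lt.ne' (Nat.dvd_one.mp hd)
  · exact Or.inl (Nat.factorization_eq_zero_of_not_prime m hp)

open scoped Classical in
lemma pind_isMultiplicative {r : ℕ} (hr : 0 < r) : (pind r).IsMultiplicative := by
  rw [ArithmeticFunction.IsMultiplicative.iff_ne_zero]
  constructor
  · rw [pind_apply, if_pos ⟨one_pos, 1, one_pow r⟩]
  · intro m n hm hn h
    have hmn : m * n ≠ 0 := mul_ne_zero hm hn
    have key : (∃ a, a ^ r = m * n) ↔ (∃ a, a ^ r = m) ∧ (∃ a, a ^ r = n) := by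
      rw [exists_pow_eq_iff hr hmn, exists_pow_eq_iff hr hm, exists_pow_eq_iff hr hn]
      constructor
      · intro hall
        constructor <;> intro p <;> have h0 := hall p <;>
          rw [Nat.factorization_mul hm hn, Finsupp.add_apply] at h0 <;>
          rcases factorization_eq_zero_or h p with h' | h' <;>
          simp only [h', add_zero, zero_add] at h0 <;> simp [h', h0]
      · rintro ⟨ha, hb⟩ p
        rw [Nat.factorization_mul hm hn, Finsupp.add_apply]
        exact Nat.dvd_add (ha p) (hb p)
    simp only [pind_apply]
    have hiff : (0 < m * n ∧ ∃ a, a ^ r = m * n)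
        ↔ ((0 < m ∧ ∃ a, a ^ r = m) ∧ (0 < n ∧ ∃ a, a ^ r = n)) := by
      constructor
      · rintro ⟨-, hx⟩
        exact ⟨⟨Nat.pos_of_ne_zero hm, (key.mp hx).1⟩, ⟨Nat.pos_of_ne_zero hn, (key.mp hx).2⟩⟩
      · rintro ⟨⟨-, h1⟩, ⟨-, h2⟩⟩
        exact ⟨Nat.pos_of_ne_zero hmn, key.mpr ⟨h1, h2⟩⟩
    rw [if_congr hiff rfl rfl]
    split_ifs <;> simp_all

lemma A2_isMultiplicative : A2.IsMultiplicative := by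
  constructor
  · simp [A2_apply, Afun]
  · intro m n h
    simp only [A2_apply]
    rcases eq_or_ne m 0 with rfl | hm
    · have : n = 1 := Nat.coprime_zero_left n |>.mp h
      subst this
      simp [Afun]
    rcases eq_or_ne n 0 with rfl | hn
    · have : m = 1 := Nat.coprime_zero_right m |>.mp h
      subst this
      simp [Afun]
    simp only [Afun, if_neg (mul_ne_zero hm hn), if_neg hm, if_neg hn]
    rw [Nat.primeFactors_mul hm hn, Finset.prod_union (Nat.Coprime.disjoint_primeFactors h)]
    congr 1
    · apply Finset.prod_congr rfl
      intro p hp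
      congr 1
      rw [Nat.factorization_mul hm hn, Finsupp.add_apply]
      rcases factorization_eq_zero_or h p with h' | h'
      · exfalso
        have : m.factorization p ≠ 0 := by
          rw [← Finsupp.mem_support_iff, Nat.support_factorization]
          exact hp
        exact this h'
      · rw [h', add_zero]
    · apply Finset.prod_congr rfl
      intro p hp
      congr 1
      rw [Nat.factorization_mul hm hn, Finsupp.add_apply]
      rcases factorization_eq_zero_or h p with h' | h'
      · rw [h', zero_add]
      · exfalso
        have : n.factorization p ≠ 0 := by
          rw [← Finsupp.mem_support_iff, Nat.support_factorization]
          exact hp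
        exact this h'

/-! ### Values at prime powers -/

lemma alphaP_two_zero : alphaP 2 0 = 1 := by
  rw [alphaP_two_eq]
  decide

lemma A2_apply_prime_pow {p : ℕ} (hp : p.Prime) (k : ℕ) : A2 (p ^ k) = alphaP 2 k := by
  rcases Nat.eq_zero_or_pos k with rfl | hk
  · rw [pow_zero, A2_apply, Afun, if_neg one_ne_zero, alphaP_two_zero]
    simp
  · rw [A2_apply, Afun, if_neg (pow_ne_zero k hp.pos.ne')]
    rw [Nat.primeFactors_pow _ hk.ne', hp.primeFactors]
    rw [Finset.prod_singleton, Nat.Prime.factorization_pow hp, Finsupp.single_eq_same]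

lemma pind_apply_prime_pow {p : ℕ} (hp : p.Prime) {r : ℕ} (hr : 0 < r) (k : ℕ) :
    pind r (p ^ k) = if r ∣ k then 1 else 0 := by
  rw [pind_apply]
  have hpk : 0 < p ^ k := pow_pos hp.pos k
  by_cases h : r ∣ k
  · rw [if_pos h, if_pos]
    obtain ⟨i, rfl⟩ := h
    exact ⟨hpk, p ^ i, by rw [← pow_mul, mul_comm]⟩
  · rw [if_neg h, if_neg]
    rintro ⟨-, m, hm⟩
    apply h
    have hmp : m ∣ p ^ k := by
      rw [← hm]
      exact dvd_pow_self m hr.ne'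
    obtain ⟨i, hik, rfl⟩ := (Nat.dvd_prime_pow hp).mp hmp
    rw [← pow_mul] at hm
    have hik2 := Nat.pow_right_injective hp.two_le hm
    exact ⟨i, by rw [← hik2, mul_comm]⟩

lemma zeta_apply_prime_pow {p : ℕ} (hp : p.Prime) (k : ℕ) :
    (ζ : ArithmeticFunction ℕ) (p ^ k) = 1 := by
  rw [ArithmeticFunction.zeta_apply, if_neg (pow_ne_zero k hp.pos.ne')]

lemma mul_apply_prime_pow {p : ℕ} (hp : p.Prime) (F G : ArithmeticFunction ℕ) (k : ℕ) :
    (F * G) (p ^ k) = ∑ j ∈ range (k+1), F (p ^ j) * G (p ^ (k - j)) := by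
  rw [ArithmeticFunction.mul_apply,
    Nat.sum_divisorsAntidiagonal (f := fun d e => F d * G e),
    Nat.sum_divisors_prime_pow hp]
  apply Finset.sum_congr rfl
  intro j hj
  rw [mem_range] at hj
  congr 2
  rw [Nat.pow_div (by omega : j ≤ k) hp.pos]

/-! ### The key identity of arithmetic functions -/

lemma key_identity :
    pind 3 * A2 = ((ζ : ArithmeticFunction ℕ) * (ζ * (pind 2 * (pind 2 * pind 2)))) := by
  have h2 : (pind 2).IsMultiplicative := pind_isMultiplicative (by norm_num)
  have h3 : (pind 3).IsMultiplicative := pind_isMultiplicative (by norm_num)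
  have hz : (ζ : ArithmeticFunction ℕ).IsMultiplicative := isMultiplicative_zeta
  rw [ArithmeticFunction.IsMultiplicative.eq_iff_eq_on_prime_powers _
    (h3.mul A2_isMultiplicative) _ (hz.mul (hz.mul (h2.mul (h2.mul h2))))]
  intro p k hp
  have e1 : (pind 2 * pind 2) (p ^ k) = (S1fin k).card := by
    rw [mul_apply_prime_pow hp, S1fin_card]
    apply Finset.sum_congr rfl
    intro j _
    rw [pind_apply_prime_pow hp (by norm_num), pind_apply_prime_pow hp (by norm_num)]
  have e2 : (pind 2 * (pind 2 * pind 2)) (p ^ k) = (S2fin k).card := by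
    rw [mul_apply_prime_pow hp, S2fin_card]
    apply Finset.sum_congr rfl
    intro j _
    rw [pind_apply_prime_pow hp (by norm_num)]
    have : (pind 2 * pind 2) (p ^ (k - j)) = (S1fin (k-j)).card := by
      rw [mul_apply_prime_pow hp, S1fin_card]
      apply Finset.sum_congr rfl
      intro i _
      rw [pind_apply_prime_pow hp (by norm_num), pind_apply_prime_pow hp (by norm_num)]
    rw [this]
  have e3 : ((ζ : ArithmeticFunction ℕ) * (pind 2 * (pind 2 * pind 2))) (p ^ k)
      = (S3fin k).card := by
    rw [mul_apply_prime_pow hp, S3fin_card]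
    apply Finset.sum_congr rfl
    intro j _
    rw [zeta_apply_prime_pow hp]
    have : (pind 2 * (pind 2 * pind 2)) (p ^ (k - j)) = (S2fin (k-j)).card := by
      rw [mul_apply_prime_pow hp, S2fin_card]
      apply Finset.sum_congr rfl
      intro i _
      rw [pind_apply_prime_pow hp (by norm_num)]
      have : (pind 2 * pind 2) (p ^ (k - j - i)) = (S1fin (k-j-i)).card := by
        rw [mul_apply_prime_pow hp, S1fin_card]
        apply Finset.sum_congr rfl
        intro l _
        rw [pind_apply_prime_pow hp (by norm_num), pind_apply_prime_pow hp (by norm_num)]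
      rw [this]
    rw [this]
  have e4 : ((ζ : ArithmeticFunction ℕ) * ((ζ : ArithmeticFunction ℕ) *
      (pind 2 * (pind 2 * pind 2)))) (p ^ k) = (Sfin k).card := by
    rw [mul_apply_prime_pow hp, Sfin_card]
    apply Finset.sum_congr rfl
    intro j _
    rw [zeta_apply_prime_pow hp]
    have : ((ζ : ArithmeticFunction ℕ) * (pind 2 * (pind 2 * pind 2))) (p ^ (k - j))
        = (S3fin (k-j)).card := by
      rw [mul_apply_prime_pow hp, S3fin_card]
      apply Finset.sum_congr rfl
      intro i _
      rw [zeta_apply_prime_pow hp]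
      have : (pind 2 * (pind 2 * pind 2)) (p ^ (k - j - i)) = (S2fin (k-j-i)).card := by
        rw [mul_apply_prime_pow hp, S2fin_card]
        apply Finset.sum_congr rfl
        intro l _
        rw [pind_apply_prime_pow hp (by norm_num)]
        have : (pind 2 * pind 2) (p ^ (k - j - i - l)) = (S1fin (k-j-i-l)).card := by
          rw [mul_apply_prime_pow hp, S1fin_card]
          apply Finset.sum_congr rfl
          intro t _
          rw [pind_apply_prime_pow hp (by norm_num), pind_apply_prime_pow hp (by norm_num)]
        rw [this]
      rw [this]
    rw [this]
  have e5 : (pind 3 * A2) (p ^ k) = (Lfin k).card := by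
    rw [mul_apply_prime_pow hp, Lfin_card]
    apply Finset.sum_congr rfl
    intro j _
    rw [pind_apply_prime_pow hp (by norm_num), A2_apply_prime_pow hp, alphaP_two_eq]
  rw [e4, e5, Lfin_card_eq_Sfin_card]

/-! ### L-series computations -/

lemma coe_nat_arith (F : ArithmeticFunction ℕ) : ↗((F : ArithmeticFunction ℂ)) = ↗F := by
  funext n
  simp [natCoe_apply]

lemma natAF_LSeriesSummable_mul {F G : ArithmeticFunction ℕ} {s : ℂ}
    (hF : LSeriesSummable ↗F s) (hG : LSeriesSummable ↗G s) :
    LSeriesSummable ↗(F * G) s := by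
  have h : ↗(F * G) = ↗(((F : ArithmeticFunction ℂ) * (G : ArithmeticFunction ℂ))) := by
    rw [← natCoe_mul, coe_nat_arith]
  rw [h]
  exact ArithmeticFunction.LSeriesSummable_mul
    (by rw [coe_nat_arith]; exact hF) (by rw [coe_nat_arith]; exact hG)

lemma natAF_LSeries_mul {F G : ArithmeticFunction ℕ} {s : ℂ}
    (hF : LSeriesSummable ↗F s) (hG : LSeriesSummable ↗G s) :
    LSeries ↗(F * G) s = LSeries ↗F s * LSeries ↗G s := by
  have h : ↗(F * G) = ↗(((F : ArithmeticFunction ℂ) * (G : ArithmeticFunction ℂ))) := by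
    rw [← natCoe_mul, coe_nat_arith]
  rw [h, ArithmeticFunction.LSeries_mul'
    (by rw [coe_nat_arith]; exact hF) (by rw [coe_nat_arith]; exact hG),
    coe_nat_arith, coe_nat_arith]

lemma pind_LSeriesSummable {r : ℕ} {s : ℂ} (hs : 1 < s.re) :
    LSeriesSummable ↗(pind r) s := by
  apply LSeriesSummable_of_bounded_of_one_lt_re (m := 1) _ hs
  intro n _
  rw [pind_apply]
  split_ifs <;> simp

lemma zeta_LSeriesSummable {s : ℂ} (hs : 1 < s.re) :
    LSeriesSummable ↗(ζ : ArithmeticFunction ℕ) s :=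
  LSeriesSummable_zeta_iff.mpr hs

lemma pind_LSeries_eq {r : ℕ} (hr : 0 < r) {s : ℂ} (hs : 1 < s.re) :
    LSeries ↗(pind r) s = riemannZeta ((r : ℂ) * s) := by
  have hrs : 1 < ((r : ℂ) * s).re := by
    rw [Complex.mul_re, Complex.natCast_re, Complex.natCast_im]
    have h1 : (1 : ℝ) ≤ (r : ℝ) := by exact_mod_cast hr
    nlinarith [hs]
  rw [← LSeries_one_eq_riemannZeta hrs]
  apply tsum_eq_tsum_of_ne_zero_bij (i := fun m => (m : ℕ) ^ r)
  · intro a b hab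
    exact Subtype.ext (Nat.pow_left_injective hr.ne' hab)
  · intro n hn
    have hn0 : n ≠ 0 := by
      rintro rfl
      simp [term_zero] at hn
    have hpn : pind r n ≠ 0 := by
      intro hz
      apply hn
      rw [term_of_ne_zero hn0]
      show ((pind r n : ℕ) : ℂ) / _ = 0
      rw [hz]
      simp
    rw [pind_apply] at hpn
    have hex : 0 < n ∧ ∃ m, m ^ r = n := by
      by_contra hc
      rw [if_neg hc] at hpn
      exact hpn rfl
    obtain ⟨hpos, m, hm⟩ := hex
    have hm0 : m ≠ 0 := by
      rintro rfl
      rw [zero_pow hr.ne'] at hm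
      omega
    refine ⟨⟨m, ?_⟩, hm⟩
    rw [Function.mem_support, term_of_ne_zero hm0]
    apply div_ne_zero one_ne_zero
    intro hzero
    rw [Complex.cpow_eq_zero_iff] at hzero
    exact hm0 (by exact_mod_cast hzero.1)
  · rintro ⟨m, hm⟩
    have hm0 : m ≠ 0 := by
      rintro rfl
      rw [Function.mem_support, term_zero] at hm
      exact hm rfl
    have hmr : m ^ r ≠ 0 := pow_ne_zero r hm0
    rw [term_of_ne_zero hmr, term_of_ne_zero hm0, Pi.one_apply]
    have hv : ((pind r (m ^ r) : ℕ) : ℂ) = 1 := by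
      rw [pind_apply, if_pos ⟨Nat.pos_of_ne_zero hmr, m, rfl⟩]
      norm_num
    show ((pind r (m ^ r) : ℕ) : ℂ) / ((m ^ r : ℕ) : ℂ) ^ s = 1 / (m : ℂ) ^ ((r : ℂ) * s)
    rw [hv, Nat.cast_pow, Complex.natCast_cpow_natCast_mul]

lemma A2_le_N (n : ℕ) : A2 n ≤ (pind 3 * A2) n := by
  rcases eq_or_ne n 0 with rfl | hn
  · simp
  rw [ArithmeticFunction.mul_apply]
  have hmem : ((1 : ℕ), n) ∈ n.divisorsAntidiagonal := by
    rw [Nat.mem_divisorsAntidiagonal]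
    exact ⟨one_mul n, hn⟩
  have h1 : pind 3 1 * A2 n ≤ ∑ p ∈ n.divisorsAntidiagonal, pind 3 p.1 * A2 p.2 :=
    Finset.single_le_sum (f := fun p => pind 3 p.1 * A2 p.2) (fun i _ => Nat.zero_le _) hmem
  have h2 : pind 3 1 = 1 := by
    rw [pind_apply, if_pos ⟨one_pos, 1, one_pow 3⟩]
  rw [h2, one_mul] at h1
  exact h1

lemma term_natAF_real (N : ArithmeticFunction ℕ) (sg : ℝ) (n : ℕ) :
    term ↗N (sg : ℂ) n = (((N n : ℝ) / (n : ℝ) ^ sg : ℝ) : ℂ) := by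
  rcases eq_or_ne n 0 with rfl | hn
  · simp [term_zero]
  rw [term_of_ne_zero hn, Complex.ofReal_div,
    Complex.ofReal_cpow (by positivity : (0:ℝ) ≤ (n:ℝ))]
  push_cast
  rfl

lemma A2_LSeriesSummable {s : ℂ} (hs : 1 < s.re) : LSeriesSummable ↗A2 s := by
  set sg : ℝ := s.re with hsg
  have hsgs : 1 < ((sg : ℂ)).re := by simpa using hs
  have hN : LSeriesSummable ↗(pind 3 * A2) (sg : ℂ) := by
    rw [key_identity]
    exact natAF_LSeriesSummable_mul (zeta_LSeriesSummable hsgs)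
      (natAF_LSeriesSummable_mul (zeta_LSeriesSummable hsgs)
        (natAF_LSeriesSummable_mul (pind_LSeriesSummable hsgs)
          (natAF_LSeriesSummable_mul (pind_LSeriesSummable hsgs)
            (pind_LSeriesSummable hsgs))))
  have hre : Summable fun n => (term ↗(pind 3 * A2) (sg : ℂ) n).re :=
    (Complex.hasSum_re hN.hasSum).summable
  apply Summable.of_norm_bounded hre
  intro n
  rw [norm_term_eq, term_natAF_real]
  rcases eq_or_ne n 0 with rfl | hn
  · simp
  rw [if_neg hn, Complex.ofReal_re]
  have hb : ((A2 n : ℝ)) ≤ ((pind 3 * A2) n : ℝ) := by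
    exact_mod_cast A2_le_N n
  have hpow : (0 : ℝ) < (n : ℝ) ^ sg := by
    apply Real.rpow_pos_of_pos
    exact_mod_cast Nat.pos_of_ne_zero hn
  have hnorm : ‖(↗A2 : ℕ → ℂ) n‖ = (A2 n : ℝ) := by
    show ‖((A2 n : ℕ) : ℂ)‖ = _
    simp
  rw [hnorm]
  have hc : (n : ℝ) ^ s.re = (n : ℝ) ^ sg := by rw [hsg]
  rw [hc]
  exact (div_le_div_iff_of_pos_right hpow).mpr hb

theorem stmt15 (s : ℂ) (hs : 1 < s.re) :
    ∑' n : ℕ, (Afun 2 (n + 1) : ℂ) / (n + 1 : ℂ) ^ s =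
      riemannZeta s ^ 2 * riemannZeta (2 * s) ^ 3 / riemannZeta (3 * s) := by
  have hs2 : 1 < (2 * s).re := by
    rw [Complex.mul_re]
    norm_num
    nlinarith [hs]
  have hs3 : 1 < (3 * s).re := by
    rw [Complex.mul_re]
    norm_num
    nlinarith [hs]
  have hA2 := A2_LSeriesSummable hs
  have hz := zeta_LSeriesSummable hs
  have hp2 := pind_LSeriesSummable (r := 2) hs
  have hp3 := pind_LSeriesSummable (r := 3) hs
  -- LSeries values
  have hzeta : LSeries ↗(ζ : ArithmeticFunction ℕ) s = riemannZeta s :=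
    LSeries_zeta_eq_riemannZeta hs
  have hpind2 : LSeries ↗(pind 2) s = riemannZeta (2 * s) := by
    rw [pind_LSeries_eq (by norm_num) hs]
    norm_num
  have hpind3 : LSeries ↗(pind 3) s = riemannZeta (3 * s) := by
    rw [pind_LSeries_eq (by norm_num) hs]
    norm_num
  -- the product identity of L-series
  have hLHS : LSeries ↗(pind 3 * A2) s = riemannZeta (3 * s) * LSeries ↗A2 s := by
    rw [natAF_LSeries_mul hp3 hA2, hpind3]
  have hRHS : LSeries ↗((ζ : ArithmeticFunction ℕ) * (ζ * (pind 2 * (pind 2 * pind 2)))) s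
      = riemannZeta s * (riemannZeta s * (riemannZeta (2*s) * (riemannZeta (2*s) *
        riemannZeta (2*s)))) := by
    rw [natAF_LSeries_mul hz (natAF_LSeriesSummable_mul hz (natAF_LSeriesSummable_mul hp2
      (natAF_LSeriesSummable_mul hp2 hp2)))]
    rw [natAF_LSeries_mul hz (natAF_LSeriesSummable_mul hp2
      (natAF_LSeriesSummable_mul hp2 hp2))]
    rw [natAF_LSeries_mul hp2 (natAF_LSeriesSummable_mul hp2 hp2)]
    rw [natAF_LSeries_mul hp2 hp2]
    rw [hzeta, hpind2]
  have hmain : riemannZeta (3 * s) * LSeries ↗A2 s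
      = riemannZeta s ^ 2 * riemannZeta (2 * s) ^ 3 := by
    rw [← hLHS, key_identity, hRHS]
    ring
  have hz3 : riemannZeta (3 * s) ≠ 0 := riemannZeta_ne_zero_of_one_lt_re hs3
  have hL : LSeries ↗A2 s = riemannZeta s ^ 2 * riemannZeta (2 * s) ^ 3
      / riemannZeta (3 * s) := by
    rw [eq_div_iff hz3]
    linear_combination hmain
  rw [← hL]
  rw [LSeries, Summable.tsum_eq_zero_add hA2]
  rw [term_zero, zero_add]
  apply tsum_congr
  intro n
  rw [term_of_ne_zero (Nat.succ_ne_zero n)]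
  show _ = ((A2 (n+1) : ℕ) : ℂ) / ((n+1 : ℕ) : ℂ) ^ s
  rw [A2_apply]
  push_cast
  ring
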